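/- arXiv:2204.03483 — 6 statements merged into one kernel-verified Lean document; each statement's English description precedes it below -/
import Mathlib

section
/- Let $A$ be a unital associative $\mathbb{C}$-algebra, let $q \in \mathbb{C}$ with $q \neq 0$, and let $a, b \in A$ satisfy the braid relation $aba = bab$ and the Hecke relations $a^2 = 1 + (q - q^{-1})a$ and $b^2 = 1 + (q - q^{-1})b$. For $u \in \mathbb{C} \setminus \{1\}$ write $a(u) = a + (q - q^{-1})(u-1)^{-1}$ and $b(u) = b + (q - q^{-1})(u-1)^{-1}$. Then for all $u, v \in \mathbb{C}$ with $u \neq 1$, $v \neq 1$ and $uv \neq 1$, the braided Yang--Baxter equation $a(u)\, b(uv)\, a(v) = b(v)\, a(uv)\, b(u)$ holds in $A$ (the Baxterization formula for the Hecke algebra). -/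
/-!
STATEMENT 2: Baxterization formula for the Hecke algebra: if `a, b` satisfy
the braid relation and the Hecke relations, then the functions
`a(u) = a + (q - q⁻¹)(u-1)⁻¹` satisfy the braided Yang–Baxter equation.
-/

lemma hecke_baxterization_aux {A : Type*} [Ring A] [Algebra ℂ A]
    (a b : A) (d r s t : ℂ)
    (hbraid : a * b * a = b * a * b)
    (ha : a * a = 1 + d • a)
    (hb : b * b = 1 + d • b)
    (hkey : s * (d + r + t) = r * t) :
    (a + algebraMap ℂ A r) * (b + algebraMap ℂ A s) * (a + algebraMap ℂ A t)
      = (b + algebraMap ℂ A t) * (a + algebraMap ℂ A s) * (b + algebraMap ℂ A r) := by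
  simp only [Algebra.algebraMap_eq_smul_one, add_mul, mul_add, smul_mul_assoc,
    mul_smul_comm, one_mul, mul_one, smul_smul, ha, hb, hbraid]
  match_scalars <;> first
    | ring1
    | linear_combination -hkey
    | linear_combination hkey

theorem hecke_baxterization (A : Type*) [Ring A] [Algebra ℂ A]
    (q : ℂ) (hq : q ≠ 0) (a b : A)
    (hbraid : a * b * a = b * a * b)
    (ha : a * a = 1 + (q - q⁻¹) • a)
    (hb : b * b = 1 + (q - q⁻¹) • b)
    (u v : ℂ) (hu : u ≠ 1) (hv : v ≠ 1) (huv : u * v ≠ 1) :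
    (a + algebraMap ℂ A ((q - q⁻¹) * (u - 1)⁻¹))
        * (b + algebraMap ℂ A ((q - q⁻¹) * (u * v - 1)⁻¹))
        * (a + algebraMap ℂ A ((q - q⁻¹) * (v - 1)⁻¹))
      = (b + algebraMap ℂ A ((q - q⁻¹) * (v - 1)⁻¹))
        * (a + algebraMap ℂ A ((q - q⁻¹) * (u * v - 1)⁻¹))
        * (b + algebraMap ℂ A ((q - q⁻¹) * (u - 1)⁻¹)) := by
  have hu' : u - 1 ≠ 0 := sub_ne_zero.mpr hu
  have hv' : v - 1 ≠ 0 := sub_ne_zero.mpr hv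
  have huv' : u * v - 1 ≠ 0 := sub_ne_zero.mpr huv
  apply hecke_baxterization_aux a b (q - q⁻¹) _ _ _ hbraid ha hb
  generalize q - q⁻¹ = d
  field_simp
  ring
end

section
/- Let $N \ge 1$, let $q \in \mathbb{C}$ with $q \neq 0$, let $V = \mathbb{C}^N$ with standard basis $(e_1, \dots, e_N)$, and define $\check{R} \in \mathrm{End}(V \otimes V)$ by $\check{R}(e_a \otimes e_b) = q\, e_a \otimes e_b$ if $a = b$, $\check{R}(e_a \otimes e_b) = e_b \otimes e_a + (q - q^{-1})\, e_a \otimes e_b$ if $a < b$, and $\check{R}(e_a \otimes e_b) = e_b \otimes e_a$ if $a > b$. For $u \in \mathbb{C} \setminus \{1\}$ set $\check{R}(u) = \check{R} + (q - q^{-1})(u - 1)^{-1}\, \mathrm{Id}_{V \otimes V}$. Then for all $u, v \in \mathbb{C}$ with $u \neq 1$, $v \neq 1$, $uv \neq 1$, the braided Yang--Baxter equation $(\check{R}(u) \otimes \mathrm{Id}_V)(\mathrm{Id}_V \otimes \check{R}(uv))(\check{R}(v) \otimes \mathrm{Id}_V) = (\mathrm{Id}_V \otimes \check{R}(v))(\check{R}(uv)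 \otimes \mathrm{Id}_V)(\mathrm{Id}_V \otimes \check{R}(u))$ holds on $V \otimes V \otimes V$. -/
/-!
STATEMENT 4: The Baxterized operator `Ř(u) = Ř + (q - q⁻¹)(u-1)⁻¹ Id` built
from the explicit Hecke `R`-matrix on `ℂ^N ⊗ ℂ^N` satisfies the braided
Yang–Baxter equation on `ℂ^N ⊗ ℂ^N ⊗ ℂ^N`.
-/

open TensorProduct

noncomputable section

/-- The standard basis vector `e a` of `ℂ^N`. -/
def e (N : ℕ) (a : Fin N) : Fin N → ℂ := Pi.single a 1

variable (V : Type*) [AddCommGroup V] [Module ℂ V]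

/-- `S₂₃`: the operator acting as `S` on the second and third tensor factors
(`Id_V ⊗ S`). -/
def op23 (S : Module.End ℂ (V ⊗[ℂ] V)) : Module.End ℂ (V ⊗[ℂ] (V ⊗[ℂ] V)) :=
  LinearMap.lTensor V S

/-- `S₁₂`: the operator acting as `S` on the first and second tensor factors
(`S ⊗ Id_V`). -/
def op12 (S : Module.End ℂ (V ⊗[ℂ] V)) : Module.End ℂ (V ⊗[ℂ] (V ⊗[ℂ] V)) :=
  (TensorProduct.assoc ℂ V V V).toLinearMap ∘ₗ (LinearMap.rTensor V S) ∘ₗ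
    (TensorProduct.assoc ℂ V V V).symm.toLinearMap

/-- The Baxterized operator `Ř(u) = Ř + (q - q⁻¹)(u - 1)⁻¹ Id`. -/
def Rbax (R : Module.End ℂ (V ⊗[ℂ] V)) (q u : ℂ) : Module.End ℂ (V ⊗[ℂ] V) :=
  R + ((q - q⁻¹) * (u - 1)⁻¹) • (1 : Module.End ℂ (V ⊗[ℂ] V))

/- Auxiliary lemmas. -/

lemma op23_apply (S : Module.End ℂ (V ⊗[ℂ] V)) (x y z : V) :
    op23 V S (x ⊗ₜ[ℂ] (y ⊗ₜ[ℂ] z)) = x ⊗ₜ[ℂ] S (y ⊗ₜ[ℂ] z) := rfl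

lemma op12_apply (S : Module.End ℂ (V ⊗[ℂ] V)) (x y z : V) :
    op12 V S (x ⊗ₜ[ℂ] (y ⊗ₜ[ℂ] z)) = TensorProduct.assoc ℂ V V V (S (x ⊗ₜ[ℂ] y) ⊗ₜ[ℂ] z) := by
  simp [op12, TensorProduct.assoc_symm_tmul]

lemma op23_mul (S T : Module.End ℂ (V ⊗[ℂ] V)) : op23 V (S * T) = op23 V S * op23 V T := by
  simp [op23, Module.End.mul_eq_comp, LinearMap.lTensor_comp]

lemma op12_mul (S T : Module.End ℂ (V ⊗[ℂ] V)) : op12 V (S * T) = op12 V S * op12 V T := by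
  apply LinearMap.ext; intro x
  simp [op12, Module.End.mul_eq_comp, LinearMap.rTensor_comp]

lemma op23_bax (S : Module.End ℂ (V ⊗[ℂ] V)) (s : ℂ) :
    op23 V (S + s • 1) = op23 V S + s • 1 := by
  apply LinearMap.ext; intro x
  simp [op23, LinearMap.lTensor_add, LinearMap.lTensor_smul, Module.End.one_eq_id,
    LinearMap.lTensor_id]

lemma op12_bax (S : Module.End ℂ (V ⊗[ℂ] V)) (s : ℂ) :
    op12 V (S + s • 1) = op12 V S + s • 1 := by
  apply LinearMap.ext; intro x
  simp [op12, LinearMap.rTensor_add, LinearMap.rTensor_smul, Module.End.one_eq_id,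
    LinearMap.rTensor_id]

lemma op23_smul (S : Module.End ℂ (V ⊗[ℂ] V)) (s : ℂ) :
    op23 V (s • S) = s • op23 V S := by
  apply LinearMap.ext; intro x
  simp [op23, LinearMap.lTensor_smul]

lemma op12_smul (S : Module.End ℂ (V ⊗[ℂ] V)) (s : ℂ) :
    op12 V (s • S) = s • op12 V S := by
  apply LinearMap.ext; intro x
  simp [op12, LinearMap.rTensor_smul]

lemma op23_add (S T : Module.End ℂ (V ⊗[ℂ] V)) :
    op23 V (S + T) = op23 V S + op23 V T := by
  apply LinearMap.ext; intro x
  simp [op23, LinearMap.lTensor_add]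

lemma op12_add (S T : Module.End ℂ (V ⊗[ℂ] V)) :
    op12 V (S + T) = op12 V S + op12 V T := by
  apply LinearMap.ext; intro x
  simp [op12, LinearMap.rTensor_add]

lemma op23_one : op23 V 1 = 1 := by
  apply LinearMap.ext; intro x
  simp [op23, Module.End.one_eq_id, LinearMap.lTensor_id]

lemma op12_one : op12 V 1 = 1 := by
  apply LinearMap.ext; intro x
  simp [op12, Module.End.one_eq_id, LinearMap.rTensor_id]

/-- The Hecke relation for the explicit `R`-matrix. -/
lemma hecke_rel (N : ℕ) (q : ℂ) (hq : q ≠ 0)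
    (R : Module.End ℂ ((Fin N → ℂ) ⊗[ℂ] (Fin N → ℂ)))
    (hdiag : ∀ a : Fin N, R (e N a ⊗ₜ[ℂ] e N a) = q • (e N a ⊗ₜ[ℂ] e N a))
    (hlt : ∀ a b : Fin N, a < b →
      R (e N a ⊗ₜ[ℂ] e N b) = e N b ⊗ₜ[ℂ] e N a + (q - q⁻¹) • (e N a ⊗ₜ[ℂ] e N b))
    (hgt : ∀ a b : Fin N, b < a →
      R (e N a ⊗ₜ[ℂ] e N b) = e N b ⊗ₜ[ℂ] e N a) :
    R * R = (q - q⁻¹) • R + 1 := by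
  have hbe : ∀ a : Fin N, (Pi.basisFun ℂ (Fin N)) a = e N a := by
    intro a; simp [e, Pi.basisFun_apply]
  apply Module.Basis.ext ((Pi.basisFun ℂ (Fin N)).tensorProduct (Pi.basisFun ℂ (Fin N)))
  rintro ⟨a, b⟩
  simp only [Module.Basis.tensorProduct_apply, hbe, Module.End.mul_apply, LinearMap.add_apply,
    LinearMap.smul_apply, Module.End.one_apply]
  rcases lt_trichotomy a b with h | h | h
  · simp only [hlt a b h, hgt b a h, map_add, map_smul]
    match_scalars <;> field_simp <;> try ring
  · subst h
    simp only [hdiag, map_smul]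
    match_scalars <;> field_simp <;> try ring
  · simp only [hgt a b h, hlt b a h, map_add, map_smul]
    match_scalars <;> field_simp <;> try ring

set_option maxHeartbeats 4000000 in
set_option synthInstance.maxHeartbeats 1000000 in
/-- The braid relation for the explicit `R`-matrix. -/
lemma braid_rel (N : ℕ) (q : ℂ) (hq : q ≠ 0)
    (R : Module.End ℂ ((Fin N → ℂ) ⊗[ℂ] (Fin N → ℂ)))
    (hdiag : ∀ a : Fin N, R (e N a ⊗ₜ[ℂ] e N a) = q • (e N a ⊗ₜ[ℂ] e N a))
    (hlt : ∀ a b : Fin N, a < b →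
      R (e N a ⊗ₜ[ℂ] e N b) = e N b ⊗ₜ[ℂ] e N a + (q - q⁻¹) • (e N a ⊗ₜ[ℂ] e N b))
    (hgt : ∀ a b : Fin N, b < a →
      R (e N a ⊗ₜ[ℂ] e N b) = e N b ⊗ₜ[ℂ] e N a) :
    op12 (Fin N → ℂ) R * op23 (Fin N → ℂ) R * op12 (Fin N → ℂ) R
      = op23 (Fin N → ℂ) R * op12 (Fin N → ℂ) R * op23 (Fin N → ℂ) R := by
  have hbe : ∀ a : Fin N, (Pi.basisFun ℂ (Fin N)) a = e N a := by
    intro a; simp [e, Pi.basisFun_apply]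
  apply Module.Basis.ext ((Pi.basisFun ℂ (Fin N)).tensorProduct
    ((Pi.basisFun ℂ (Fin N)).tensorProduct (Pi.basisFun ℂ (Fin N))))
  rintro ⟨a, b, c⟩
  simp only [Module.Basis.tensorProduct_apply, hbe, Module.End.mul_apply]
  rcases lt_trichotomy a b with h1 | h1 | h1 <;>
    rcases lt_trichotomy b c with h2 | h2 | h2 <;>
    rcases lt_trichotomy a c with h3 | h3 | h3 <;>
    subst_vars <;>
    first
    | omega
    | (simp only [*, op12_apply, op23_apply, hdiag, map_add, map_smul, tmul_add,
         add_tmul, ← smul_tmul', tmul_smul, TensorProduct.assoc_tmul, smul_add, smul_smul]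
       try (match_scalars <;> (field_simp; try ring)))

set_option maxHeartbeats 1000000 in
theorem hecke_R_matrix_yang_baxter (N : ℕ) (hN : 1 ≤ N) (q : ℂ) (hq : q ≠ 0)
    (R : Module.End ℂ ((Fin N → ℂ) ⊗[ℂ] (Fin N → ℂ)))
    (hdiag : ∀ a : Fin N, R (e N a ⊗ₜ[ℂ] e N a) = q • (e N a ⊗ₜ[ℂ] e N a))
    (hlt : ∀ a b : Fin N, a < b →
      R (e N a ⊗ₜ[ℂ] e N b) = e N b ⊗ₜ[ℂ] e N a + (q - q⁻¹) • (e N a ⊗ₜ[ℂ] e N b))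
    (hgt : ∀ a b : Fin N, b < a →
      R (e N a ⊗ₜ[ℂ] e N b) = e N b ⊗ₜ[ℂ] e N a)
    (u v : ℂ) (hu : u ≠ 1) (hv : v ≠ 1) (huv : u * v ≠ 1) :
    op12 (Fin N → ℂ) (Rbax (Fin N → ℂ) R q u)
        * op23 (Fin N → ℂ) (Rbax (Fin N → ℂ) R q (u * v))
        * op12 (Fin N → ℂ) (Rbax (Fin N → ℂ) R q v)
      = op23 (Fin N → ℂ) (Rbax (Fin N → ℂ) R q v)
        * op12 (Fin N → ℂ) (Rbax (Fin N → ℂ) R q (u * v))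
        * op23 (Fin N → ℂ) (Rbax (Fin N → ℂ) R q u) := by
  set A := op12 (Fin N → ℂ) R with hA0
  set B := op23 (Fin N → ℂ) R with hB0
  have hbr : A * B * A = B * A * B := braid_rel N q hq R hdiag hlt hgt
  have hhecke : R * R = (q - q⁻¹) • R + 1 := hecke_rel N q hq R hdiag hlt hgt
  have hAA : A * A = (q - q⁻¹) • A + 1 := by
    rw [hA0, ← op12_mul, hhecke, op12_add, op12_smul, op12_one]
  have hBB : B * B = (q - q⁻¹) • B + 1 := by
    rw [hB0, ← op23_mul, hhecke, op23_add, op23_smul, op23_one]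
  have hu' : u - 1 ≠ 0 := sub_ne_zero.mpr hu
  have hv' : v - 1 ≠ 0 := sub_ne_zero.mpr hv
  have huv' : u * v - 1 ≠ 0 := sub_ne_zero.mpr huv
  have e12 : ∀ w : ℂ, op12 (Fin N → ℂ) (Rbax (Fin N → ℂ) R q w)
      = A + ((q - q⁻¹) * (w - 1)⁻¹) • 1 := by
    intro w; rw [Rbax, op12_bax, hA0]
  have e23 : ∀ w : ℂ, op23 (Fin N → ℂ) (Rbax (Fin N → ℂ) R q w)
      = B + ((q - q⁻¹) * (w - 1)⁻¹) • 1 := by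
    intro w; rw [Rbax, op23_bax, hB0]
  simp only [e12, e23]
  simp only [mul_add, add_mul, smul_mul_assoc, mul_smul_comm, mul_one, one_mul,
    smul_smul, smul_add]
  rw [hbr, hAA, hBB]
  clear hdiag hlt hgt hhecke
  have huv'' : -1 + u * v ≠ 0 := by rwa [neg_add_eq_sub]
  match_scalars <;> (field_simp; try ring)
  all_goals (field_simp; ring)

end
end

section
/- Let $A$ be a unital associative $\mathbb{C}$-algebra and let $a, b \in A$ satisfy $a^2 = 1$, $b^2 = 1$ and $aba = bab$. Then for all $u, v \in \mathbb{C}$ with $u \neq 0$, $v \neq 0$ and $u + v \neq 0$, the additive braided Yang--Baxter equation $(a + u^{-1})\,(b + (u+v)^{-1})\,(a + v^{-1}) = (b + v^{-1})\,(a + (u+v)^{-1})\,(b + u^{-1})$ holds in $A$ (the Baxterization formula for the symmetric group). -/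
/-!
STATEMENT 6: Baxterization formula for the symmetric group: if `a² = b² = 1`
and `aba = bab`, then `(a + u⁻¹)(b + (u+v)⁻¹)(a + v⁻¹) = (b + v⁻¹)(a + (u+v)⁻¹)(b + u⁻¹)`.
-/

theorem symmetric_group_baxterization (A : Type*) [Ring A] [Algebra ℂ A]
    (a b : A) (ha : a * a = 1) (hb : b * b = 1) (hbraid : a * b * a = b * a * b)
    (u v : ℂ) (hu : u ≠ 0) (hv : v ≠ 0) (huv : u + v ≠ 0) :
    (a + algebraMap ℂ A u⁻¹) * (b + algebraMap ℂ A (u + v)⁻¹) * (a + algebraMap ℂ A v⁻¹)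
      = (b + algebraMap ℂ A v⁻¹) * (a + algebraMap ℂ A (u + v)⁻¹)
        * (b + algebraMap ℂ A u⁻¹) := by
  simp only [Algebra.algebraMap_eq_smul_one, mul_add, add_mul, smul_mul_assoc,
    mul_smul_comm, one_mul, mul_one, smul_smul, ha, hb, hbraid]
  match_scalars <;> field_simp <;> ring
end

section
/- Let $A$ be a unital associative $\mathbb{C}$-algebra and, for each integer $i \ge 1$, let $\sigma_i : \mathbb{C} \to A$ be a function. Assume that for all $i \ge 1$ and all $u, v \in \mathbb{C}$ the braided Yang--Baxter equation $\sigma_i(u)\,\sigma_{i+1}(uv)\,\sigma_i(v) = \sigma_{i+1}(v)\,\sigma_i(uv)\,\sigma_{i+1}(u)$ holds, and that $\sigma_i(u)\,\sigma_j(v) = \sigma_j(v)\,\sigma_i(u)$ whenever $|i - j| > 1$. Fix $k \ge 1$ and nonzero complex parameters $c_1, \dots, c_k$, and for each $m \ge 1$ define the fused element $\sigma_m^{(\mathbf{c})}(u) = \prod_{i=k,\dots,1}^{\leftarrow} \big( \sigma_{(m-1)k+i}(u \tfrac{c_1}{c_i})\, \sigma_{(m-1)k+i+1}(u \tfrac{c_2}{c_i})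 \cdots \sigma_{(m-1)k+i+k-1}(u \tfrac{c_k}{c_i}) \big)$, where the outer product is taken from left to right in decreasing order of $i$ (the factor with $i = k$ first) and each inner product from left to right in increasing order of the second index. Then for every $m \ge 1$ and all $u, v \in \mathbb{C}$, the braided Yang--Baxter equation $\sigma_m^{(\mathbf{c})}(u)\, \sigma_{m+1}^{(\mathbf{c})}(uv)\, \sigma_m^{(\mathbf{c})}(v) = \sigma_{m+1}^{(\mathbf{c})}(v)\, \sigma_m^{(\mathbf{c})}(uv)\, \sigma_{m+1}^{(\mathbf{c})}(u)$ holds in $A$ (the first step of the fusion procedure). -/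
/-!
STATEMENT 13: First step of the fusion procedure: the fused elements
`σₘ⁽ᶜ⁾(u)` built from a family of Baxterized generators satisfying the
braided Yang–Baxter equation and distant commutation again satisfy the
braided Yang–Baxter equation.
-/

/-- The fused element
`σₘ⁽ᶜ⁾(u) = ∏←_{i=k,…,1} σ_{(m-1)k+i}(u c₁/cᵢ) σ_{(m-1)k+i+1}(u c₂/cᵢ) ⋯ σ_{(m-1)k+i+k-1}(u c_k/cᵢ)`,
the outer product taken from left to right in decreasing order of `i`
and each inner product from left to right in increasing order. -/
noncomputable def fusedSigma {A : Type*} [Ring A] (σ : ℕ → ℂ → A) (k : ℕ) (c : ℕ → ℂ)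
    (m : ℕ) (u : ℂ) : A :=
  ((List.range k).reverse.map (fun s =>
    ((List.range k).map (fun t =>
      σ ((m - 1) * k + (s + 1) + t) (u * c (t + 1) / c (s + 1)))).prod)).prod

namespace Fusion13

variable {A : Type*} [Ring A] {ι : Type*}

/-- helper: swap two commuting factors in the middle of a right-assoc word -/
lemma swap_mid {a b x : A} (h : a * b = b * a) : a * (b * x) = b * (a * x) := by
  rw [← mul_assoc, h, mul_assoc]

lemma triple_cons {a b c d e f x : A} (h : a * b * c = d * e * f) :
    a * (b * (c * x)) = d * (e * (f * x)) := by
  simp only [← mul_assoc]; rw [h]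

lemma triple_last {a b c d e f : A} (h : a * b * c = d * e * f) :
    a * (b * c) = d * (e * f) := by
  simpa only [mul_assoc] using h

variable (σ : ℕ → ℂ → A) (r : ι → ι → ℂ)

/-- one strand `x` crossing rightwards through the strands of `Y`,
crossings at positions `p, p+1, …`. -/
def crossRow : ℕ → ι → List ι → A
  | _, _, [] => 1
  | p, x, y :: Y => σ p (r x y) * crossRow (p + 1) x Y

/-- block `X` crossing rightwards through block `Y`; rows for later strands
of `X` come first. -/
def cross : ℕ → List ι → List ι → A
  | _, [], _ => 1
  | p, x :: X, Y => cross (p + 1) X Y * crossRow σ r p x Y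

@[simp] lemma crossRow_nil (p : ℕ) (x : ι) : crossRow σ r p x [] = 1 := rfl

@[simp] lemma cross_nil (p : ℕ) (Y : List ι) : cross σ r p [] Y = 1 := rfl

lemma cross_cons (p : ℕ) (x : ι) (X Y : List ι) :
    cross σ r p (x :: X) Y = cross σ r (p + 1) X Y * crossRow σ r p x Y := rfl

@[simp] lemma cross_nil_right : ∀ (p : ℕ) (X : List ι), cross σ r p X [] = 1
  | _, [] => rfl
  | p, _ :: X => by rw [cross_cons, cross_nil_right (p+1) X, crossRow_nil, mul_one]

lemma cross_singleton (p : ℕ) (x : ι) (Y : List ι) :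
    cross σ r p [x] Y = crossRow σ r p x Y := by
  rw [cross_cons, cross_nil, one_mul]

section Comm

variable (hcomm : ∀ i j : ℕ, 1 ≤ i → 1 ≤ j → (i + 1 < j ∨ j + 1 < i) → ∀ u v : ℂ,
      σ i u * σ j v = σ j v * σ i u)

include hcomm

lemma commute_crossRow (j : ℕ) (w : ℂ) (hj : 1 ≤ j) :
    ∀ (p : ℕ) (x : ι) (Y : List ι), 1 ≤ p → (j + 1 < p ∨ p + Y.length < j) →
      Commute (σ j w) (crossRow σ r p x Y)
  | p, x, [], _, _ => by rw [crossRow_nil]; exact Commute.one_right _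
  | p, x, y :: Y, hp, hcond => by
    rw [crossRow]
    refine Commute.mul_right ?_ (commute_crossRow j w hj (p+1) x Y (by omega)
      (by simp only [List.length_cons] at hcond; omega))
    exact hcomm j p hj hp (by simp only [List.length_cons] at hcond; omega) w _

lemma commute_cross (j : ℕ) (w : ℂ) (hj : 1 ≤ j) :
    ∀ (p : ℕ) (X Y : List ι), 1 ≤ p → (j + 1 < p ∨ p + X.length + Y.length ≤ j) →
      Commute (σ j w) (cross σ r p X Y)
  | p, [], Y, _, _ => by rw [cross_nil]; exact Commute.one_right _
  | p, x :: X, Y, hp, hcond => by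
    rw [cross_cons]
    refine Commute.mul_right (commute_cross j w hj (p+1) X Y (by omega)
      (by simp only [List.length_cons] at hcond; omega)) ?_
    exact commute_crossRow σ r hcomm j w hj p x Y hp
      (by simp only [List.length_cons] at hcond; omega)

lemma commute_cross_crossRow :
    ∀ (p : ℕ) (X Y : List ι) (p' : ℕ) (x' : ι) (Y' : List ι), 1 ≤ p →
      p + X.length + Y.length ≤ p' →
      Commute (cross σ r p X Y) (crossRow σ r p' x' Y')
  | p, X, Y, p', x', [], hp, hcond => by rw [crossRow_nil]; exact Commute.one_right _
  | p, X, Y, p', x', y' :: Y', hp, hcond => by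
    rw [crossRow]
    refine Commute.mul_right ?_
      (commute_cross_crossRow p X Y (p'+1) x' Y' hp (by omega))
    exact (commute_cross σ r hcomm p' _ (by omega) p X Y hp (Or.inr hcond)).symm

lemma commute_cross_cross :
    ∀ (p : ℕ) (X Y : List ι) (p' : ℕ) (X' Y' : List ι), 1 ≤ p →
      p + X.length + Y.length ≤ p' →
      Commute (cross σ r p X Y) (cross σ r p' X' Y')
  | p, X, Y, p', [], Y', hp, hcond => by rw [cross_nil]; exact Commute.one_right _
  | p, X, Y, p', x' :: X', Y', hp, hcond => by
    rw [cross_cons]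
    exact Commute.mul_right
      (commute_cross_cross p X Y (p'+1) X' Y' hp (by omega))
      (commute_cross_crossRow σ r hcomm p X Y p' x' Y' hp hcond)

end Comm

lemma crossRow_append : ∀ (p : ℕ) (x : ι) (Y₁ Y₂ : List ι),
    crossRow σ r p x (Y₁ ++ Y₂) = crossRow σ r p x Y₁ * crossRow σ r (p + Y₁.length) x Y₂
  | p, x, [], Y₂ => by simp [crossRow_nil]
  | p, x, y :: Y₁, Y₂ => by
    rw [List.cons_append, crossRow, crossRow, crossRow_append (p+1) x Y₁ Y₂, mul_assoc,
      List.length_cons]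
    ring_nf

lemma cross_append_left : ∀ (p : ℕ) (X₁ X₂ Y : List ι),
    cross σ r p (X₁ ++ X₂) Y = cross σ r (p + X₁.length) X₂ Y * cross σ r p X₁ Y
  | p, [], X₂, Y => by simp
  | p, x :: X₁, X₂, Y => by
    rw [List.cons_append, cross_cons, cross_append_left (p+1) X₁ X₂ Y, cross_cons,
      List.length_cons, mul_assoc]
    ring_nf

section WithComm

variable (hcomm : ∀ i j : ℕ, 1 ≤ i → 1 ≤ j → (i + 1 < j ∨ j + 1 < i) → ∀ u v : ℂ,
      σ i u * σ j v = σ j v * σ i u)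

include hcomm

lemma cross_append_right : ∀ (p : ℕ) (X Y₁ Y₂ : List ι), 1 ≤ p →
    cross σ r p X (Y₁ ++ Y₂) = cross σ r p X Y₁ * cross σ r (p + Y₁.length) X Y₂
  | p, [], Y₁, Y₂, hp => by simp
  | p, x :: X, Y₁, Y₂, hp => by
    rw [cross_cons, cross_append_right (p+1) X Y₁ Y₂ (by omega),
      crossRow_append σ r p x Y₁ Y₂, cross_cons, cross_cons]
    have hsw : cross σ r (p + 1 + Y₁.length) X Y₂ * crossRow σ r p x Y₁
        = crossRow σ r p x Y₁ * cross σ r (p + 1 + Y₁.length) X Y₂ := by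
      have := commute_cross_cross σ r hcomm p [x] Y₁ (p + 1 + Y₁.length) X Y₂ hp
        (by simp)
      rw [cross_singleton] at this
      exact this.eq.symm
    calc cross σ r (p + 1) X Y₁ * cross σ r (p + 1 + Y₁.length) X Y₂ *
          (crossRow σ r p x Y₁ * crossRow σ r (p + Y₁.length) x Y₂)
        = cross σ r (p + 1) X Y₁ * (cross σ r (p + 1 + Y₁.length) X Y₂ *
            crossRow σ r p x Y₁ * crossRow σ r (p + Y₁.length) x Y₂) := by
          simp only [mul_assoc]
      _ = cross σ r (p + 1) X Y₁ * (crossRow σ r p x Y₁ *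
            cross σ r (p + 1 + Y₁.length) X Y₂ * crossRow σ r (p + Y₁.length) x Y₂) := by
          rw [hsw]
      _ = cross σ r (p + 1) X Y₁ * crossRow σ r p x Y₁ *
            (cross σ r (p + Y₁.length + 1) X Y₂ * crossRow σ r (p + Y₁.length) x Y₂) := by
          rw [show p + 1 + Y₁.length = p + Y₁.length + 1 by omega]; simp only [mul_assoc]

lemma cross_cons_right (p : ℕ) (X : List ι) (y : ι) (Y : List ι) (hp : 1 ≤ p) :
    cross σ r p X (y :: Y) = cross σ r p X [y] * cross σ r (p + 1) X Y := by
  have := cross_append_right σ r hcomm p X [y] Y hp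
  simpa using this

lemma ybe_sss (hYB : ∀ i : ℕ, 1 ≤ i → ∀ u v : ℂ,
      σ i u * σ (i + 1) (u * v) * σ i v = σ (i + 1) v * σ i (u * v) * σ (i + 1) u)
    (p : ℕ) (hp : 1 ≤ p) (x y z : ι) (hr : r x y * r y z = r x z) :
    cross σ r p [x] [y] * cross σ r (p + 1) [x] [z] * cross σ r p [y] [z]
      = cross σ r (p + 1) [y] [z] * cross σ r p [x] [z] * cross σ r (p + 1) [x] [y] := by
  simp only [cross_singleton, crossRow, crossRow_nil, mul_one]
  rw [← hr]
  exact hYB p hp (r x y) (r y z)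

end WithComm

section YBE

variable (hYB : ∀ i : ℕ, 1 ≤ i → ∀ u v : ℂ,
      σ i u * σ (i + 1) (u * v) * σ i v = σ (i + 1) v * σ i (u * v) * σ (i + 1) u)
    (hcomm : ∀ i j : ℕ, 1 ≤ i → 1 ≤ j → (i + 1 < j ∨ j + 1 < i) → ∀ u v : ℂ,
      σ i u * σ j v = σ j v * σ i u)

include hYB hcomm

lemma ybe_ssl (Z : List ι) : ∀ (p : ℕ), 1 ≤ p → ∀ x y : ι,
    (∀ z ∈ Z, r x y * r y z = r x z) →
    cross σ r p [x] [y] * cross σ r (p + 1) [x] Z * cross σ r p [y] Z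
      = cross σ r (p + 1) [y] Z * cross σ r p [x] Z * cross σ r (p + Z.length) [x] [y] := by
  induction Z with
  | nil => intro p hp x y _; simp
  | cons z Z' IH =>
    intro p hp x y hr
    rw [cross_cons_right σ r hcomm (p+1) [x] z Z' (by omega),
      cross_cons_right σ r hcomm p [y] z Z' hp,
      cross_cons_right σ r hcomm (p+1) [y] z Z' (by omega),
      cross_cons_right σ r hcomm p [x] z Z' hp,
      show (z :: Z').length = Z'.length + 1 from rfl,
      show p + (Z'.length + 1) = p + 1 + Z'.length by omega]
    have h1 : cross σ r (p+1+1) [x] Z' * cross σ r p [y] [z]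
        = cross σ r p [y] [z] * cross σ r (p+1+1) [x] Z' :=
      (commute_cross_cross σ r hcomm p [y] [z] (p+1+1) [x] Z' hp (by simp)).eq.symm
    have h2 := ybe_sss σ r hcomm hYB p hp x y z (hr z (by simp))
    have h3 := IH (p+1) (by omega) x y (fun z' hz' => hr z' (by simp [hz']))
    have h4 : cross σ r p [x] [z] * cross σ r (p+1+1) [y] Z'
        = cross σ r (p+1+1) [y] Z' * cross σ r p [x] [z] :=
      (commute_cross_cross σ r hcomm p [x] [z] (p+1+1) [y] Z' hp (by simp)).eq
    simp only [mul_assoc]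
    rw [swap_mid h1, triple_cons h2, triple_last h3, swap_mid h4]

lemma ybe_sll (Y : List ι) : ∀ (Z : List ι) (p : ℕ), 1 ≤ p → ∀ x : ι,
    (∀ y ∈ Y, ∀ z ∈ Z, r x y * r y z = r x z) →
    cross σ r p [x] Y * cross σ r (p + Y.length) [x] Z * cross σ r p Y Z
      = cross σ r (p + 1) Y Z * cross σ r p [x] Z * cross σ r (p + Z.length) [x] Y := by
  induction Y with
  | nil => intro Z p hp x _; simp
  | cons y Y' IH =>
    intro Z p hp x hr
    rw [cross_cons_right σ r hcomm p [x] y Y' hp,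
      show (y :: Y').length = Y'.length + 1 from rfl,
      show p + (Y'.length + 1) = p + 1 + Y'.length by omega,
      cross_cons σ r p y Y' Z, ← cross_singleton σ r p y Z,
      cross_cons σ r (p+1) y Y' Z, ← cross_singleton σ r (p+1) y Z,
      cross_cons_right σ r hcomm (p + Z.length) [x] y Y' (by omega),
      show p + Z.length + 1 = p + 1 + Z.length by omega]
    have hIH := IH Z (p+1) (by omega) x (fun y' hy' z hz => hr y' (by simp [hy']) z hz)
    have h2 : cross σ r p [x] [y] * cross σ r (p+1+1) Y' Z
        = cross σ r (p+1+1) Y' Z * cross σ r p [x] [y] :=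
      (commute_cross_cross σ r hcomm p [x] [y] (p+1+1) Y' Z hp (by simp)).eq
    have h3 : cross σ r (p+1+Z.length) [x] Y' * cross σ r p [y] Z
        = cross σ r p [y] Z * cross σ r (p+1+Z.length) [x] Y' :=
      (commute_cross_cross σ r hcomm p [y] Z (p+1+Z.length) [x] Y' hp (by simp)).eq.symm
    have h4 := ybe_ssl σ r hYB hcomm Z p hp x y (fun z hz => hr y (by simp) z hz)
    simp only [mul_assoc]
    rw [triple_cons hIH, swap_mid h2, h3, triple_cons h4]

lemma ybe_lll (X : List ι) : ∀ (Y Z : List ι) (p : ℕ), 1 ≤ p →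
    (∀ x ∈ X, ∀ y ∈ Y, ∀ z ∈ Z, r x y * r y z = r x z) →
    cross σ r p X Y * cross σ r (p + Y.length) X Z * cross σ r p Y Z
      = cross σ r (p + X.length) Y Z * cross σ r p X Z * cross σ r (p + Z.length) X Y := by
  induction X with
  | nil => intro Y Z p hp _; simp
  | cons x X' IH =>
    intro Y Z p hp hr
    rw [cross_cons σ r p x X' Y, ← cross_singleton σ r p x Y,
      cross_cons σ r (p + Y.length) x X' Z, ← cross_singleton σ r (p + Y.length) x Z,
      show p + Y.length + 1 = p + 1 + Y.length by omega,
      show (x :: X').length = X'.length + 1 from rfl,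
      show p + (X'.length + 1) = p + 1 + X'.length by omega,
      cross_cons σ r p x X' Z, ← cross_singleton σ r p x Z,
      cross_cons σ r (p + Z.length) x X' Y, ← cross_singleton σ r (p + Z.length) x Y,
      show p + Z.length + 1 = p + 1 + Z.length by omega]
    have hsw1 : cross σ r p [x] Y * cross σ r (p+1+Y.length) X' Z
        = cross σ r (p+1+Y.length) X' Z * cross σ r p [x] Y :=
      (commute_cross_cross σ r hcomm p [x] Y (p+1+Y.length) X' Z hp (by simp)).eq
    have h4 := ybe_sll σ r hYB hcomm Y Z p hp x (fun y hy z hz => hr x (by simp) y hy z hz)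
    have hIH := IH Y Z (p+1) (by omega)
      (fun x' hx' y hy z hz => hr x' (by simp [hx']) y hy z hz)
    have hsw2 : cross σ r (p+1+Z.length) X' Y * cross σ r p [x] Z
        = cross σ r p [x] Z * cross σ r (p+1+Z.length) X' Y :=
      (commute_cross_cross σ r hcomm p [x] Z (p+1+Z.length) X' Y hp (by simp)).eq.symm
    simp only [mul_assoc]
    rw [swap_mid hsw1, triple_last h4, triple_cons hIH, swap_mid hsw2]

end YBE

lemma crossRow_range : ∀ (n p : ℕ) (h : ℕ → ι) (x : ι),
    crossRow σ r p x ((List.range n).map h)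
      = ((List.range n).map (fun t => σ (p + t) (r x (h t)))).prod
  | 0, p, h, x => by simp
  | n + 1, p, h, x => by
    rw [List.range_succ_eq_map, List.map_cons, List.map_map, crossRow,
      crossRow_range n (p+1) (h ∘ Nat.succ) x, List.map_cons, List.prod_cons, List.map_map]
    simp only [Nat.add_zero]
    have hl : List.map (fun t => σ (p + 1 + t) (r x ((h ∘ Nat.succ) t))) (List.range n)
        = List.map ((fun t => σ (p + t) (r x (h t))) ∘ Nat.succ) (List.range n) := by
      apply List.map_congr_left
      intro t _
      simp only [Function.comp_apply]
      rw [show p + 1 + t = p + (t + 1) by omega]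
    rw [hl]

lemma cross_range : ∀ (n p : ℕ) (g : ℕ → ι) (Y : List ι),
    cross σ r p ((List.range n).map g) Y
      = (((List.range n).reverse.map (fun s => crossRow σ r (p + s) (g s) Y))).prod
  | 0, p, g, Y => by simp
  | n + 1, p, g, Y => by
    rw [List.range_succ_eq_map, List.map_cons, List.map_map, cross_cons,
      cross_range n (p+1) (g ∘ Nat.succ) Y]
    simp only [List.reverse_cons, List.map_append, List.prod_append, List.map_reverse,
      List.map_map, List.map_cons, List.map_nil, List.prod_cons, List.prod_nil, mul_one,
      Nat.add_zero]
    have hl : List.map (fun s => crossRow σ r (p + 1 + s) ((g ∘ Nat.succ) s) Y) (List.range n)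
        = List.map ((fun s => crossRow σ r (p + s) (g s) Y) ∘ Nat.succ) (List.range n) := by
      apply List.map_congr_left
      intro t _
      simp only [Function.comp_apply]
      rw [show p + 1 + t = p + (t + 1) by omega]
    rw [hl]

lemma fused_eq_cross {B : Type*} [Ring B] (σ' : ℕ → ℂ → B) (k : ℕ) (c : ℕ → ℂ)
    (r' : (ℕ × ℕ) → (ℕ × ℕ) → ℂ) (b b' : ℕ) (w : ℂ)
    (hr : ∀ s t : ℕ, r' (b, s) (b', t) = w * c (t + 1) / c (s + 1)) (m : ℕ) :
    fusedSigma σ' k c m w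
      = cross σ' r' ((m - 1) * k + 1) ((List.range k).map (fun s => (b, s)))
          ((List.range k).map (fun t => (b', t))) := by
  rw [cross_range]
  unfold fusedSigma
  congr 1
  apply List.map_congr_left
  intro s _
  rw [crossRow_range]
  congr 1
  apply List.map_congr_left
  intro t _
  rw [hr, show (m - 1) * k + 1 + s + t = (m - 1) * k + (s + 1) + t by omega]

end Fusion13

theorem fusion_first_step (A : Type*) [Ring A] [Algebra ℂ A] (σ : ℕ → ℂ → A)
    (hYB : ∀ i : ℕ, 1 ≤ i → ∀ u v : ℂ,
      σ i u * σ (i + 1) (u * v) * σ i v = σ (i + 1) v * σ i (u * v) * σ (i + 1) u)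
    (hcomm : ∀ i j : ℕ, 1 ≤ i → 1 ≤ j → (i + 1 < j ∨ j + 1 < i) → ∀ u v : ℂ,
      σ i u * σ j v = σ j v * σ i u)
    (k : ℕ) (hk : 1 ≤ k) (c : ℕ → ℂ) (hc : ∀ j : ℕ, 1 ≤ j → j ≤ k → c j ≠ 0)
    (m : ℕ) (hm : 1 ≤ m) (u v : ℂ) :
    fusedSigma σ k c m u * fusedSigma σ k c (m + 1) (u * v) * fusedSigma σ k c m v
      = fusedSigma σ k c (m + 1) v * fusedSigma σ k c m (u * v)
        * fusedSigma σ k c (m + 1) u := by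
  classical
  open Fusion13 in
  -- the crossing-parameter function on labelled strands `(block, strand)`
  set r : (ℕ × ℕ) → (ℕ × ℕ) → ℂ := fun x y =>
    (if x.1 = 0 then (if y.1 = 1 then u else u * v) else v) * c (y.2 + 1) / c (x.2 + 1)
    with hrdef
  set X : List (ℕ × ℕ) := (List.range k).map (fun s => ((0 : ℕ), s)) with hX
  set Y : List (ℕ × ℕ) := (List.range k).map (fun s => ((1 : ℕ), s)) with hY
  set Z : List (ℕ × ℕ) := (List.range k).map (fun s => ((2 : ℕ), s)) with hZ
  set p : ℕ := (m - 1) * k + 1 with hp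
  have hpk : (m + 1 - 1) * k + 1 = p + k := by
    have h1 : m + 1 - 1 = (m - 1) + 1 := by omega
    rw [h1, add_mul, one_mul, hp]
    omega
  have e1 : fusedSigma σ k c m u = cross σ r p X Y :=
    fused_eq_cross σ k c r 0 1 u (fun s t => by simp [hrdef]) m
  have e2 : fusedSigma σ k c (m + 1) (u * v) = cross σ r (p + k) X Z := by
    rw [fused_eq_cross σ k c r 0 2 (u * v) (fun s t => by simp [hrdef]) (m + 1), hpk]
  have e3 : fusedSigma σ k c m v = cross σ r p Y Z :=
    fused_eq_cross σ k c r 1 2 v (fun s t => by simp [hrdef]) m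
  have e4 : fusedSigma σ k c (m + 1) v = cross σ r (p + k) Y Z := by
    rw [fused_eq_cross σ k c r 1 2 v (fun s t => by simp [hrdef]) (m + 1), hpk]
  have e5 : fusedSigma σ k c m (u * v) = cross σ r p X Z :=
    fused_eq_cross σ k c r 0 2 (u * v) (fun s t => by simp [hrdef]) m
  have e6 : fusedSigma σ k c (m + 1) u = cross σ r (p + k) X Y := by
    rw [fused_eq_cross σ k c r 0 1 u (fun s t => by simp [hrdef]) (m + 1), hpk]
  have hco : ∀ x ∈ X, ∀ y ∈ Y, ∀ z ∈ Z, r x y * r y z = r x z := by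
    intro x hx y hy z hz
    rw [hX] at hx; rw [hY] at hy; rw [hZ] at hz
    simp only [List.mem_map, List.mem_range] at hx hy hz
    obtain ⟨s, hs, rfl⟩ := hx
    obtain ⟨t, ht, rfl⟩ := hy
    obtain ⟨q, hq, rfl⟩ := hz
    have hct : c (t + 1) ≠ 0 := hc (t + 1) (by omega) (by omega)
    simp only [hrdef]
    norm_num
    field_simp
  have key := ybe_lll σ r hYB hcomm X Y Z p (by omega) hco
  have hlX : X.length = k := by rw [hX]; simp
  have hlY : Y.length = k := by rw [hY]; simp
  have hlZ : Z.length = k := by rw [hZ]; simp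
  rw [hlX, hlY, hlZ] at key
  rw [e1, e2, e3, e4, e5, e6]
  exact key
end

section
/- Let $A$ be a unital associative $\mathbb{C}$-algebra, let $k \ge 2$, and let $q \in \mathbb{C}$ with $q \neq 0$ and $q^{2m} \neq 1$ for all $m = 1, \dots, k-1$. Let $\sigma_1, \dots, \sigma_{k-1} \in A$ satisfy the braid relations $\sigma_i \sigma_{i+1} \sigma_i = \sigma_{i+1} \sigma_i \sigma_{i+1}$, $\sigma_i \sigma_j = \sigma_j \sigma_i$ for $|i - j| > 1$, and the Hecke relations $\sigma_i^2 = 1 + (q - q^{-1})\sigma_i$. For $u \in \mathbb{C} \setminus \{1\}$ write $\sigma_j(u) = \sigma_j + (q - q^{-1})(u - 1)^{-1}$, let $c_j = q^{2(j-1)}$ for $j = 1, \dots, k$, and set $E = \prod_{i=1,\dots,k-1}^{\rightarrow} \big( \sigma_i(\tfrac{c_{i+1}}{c_1})\, \sigma_{i-1}(\tfrac{c_{i+1}}{c_2}) \cdots \sigma_1(\tfrac{c_{i+1}}{c_i}) \big)$, the product taken from left to right in increasing order of $i$. Then $E\, \sigma_i = q\, E$ for every $i = 1, \dots, k-1$ (so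 that $E$ is proportional to the $q$-symmetriser, the fusion-procedure evaluation for the one-row standard Young tableau). -/
/-!
STATEMENT 15: In the Hecke algebra, the fusion-procedure evaluation for the
one-row standard Young tableau (with contents `cⱼ = q^{2(j-1)}`) yields an
element `E` satisfying `E σᵢ = q E` for all `i`, i.e. `E` is proportional to
the `q`-symmetriser.
-/

/-- The Baxterized generator `σⱼ(u) = σⱼ + (q - q⁻¹)(u - 1)⁻¹`. -/
noncomputable def heckeBax {A : Type*} [Ring A] [Algebra ℂ A] (σ : ℕ → A) (q : ℂ)
    (j : ℕ) (u : ℂ) : A :=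
  σ j + algebraMap ℂ A ((q - q⁻¹) * (u - 1)⁻¹)

/-- The fusion element
`E = ∏→_{i=1,…,k-1} σᵢ(c_{i+1}/c₁) σ_{i-1}(c_{i+1}/c₂) ⋯ σ₁(c_{i+1}/cᵢ)`,
the outer product taken from left to right in increasing order of `i`. -/
noncomputable def fusionE {A : Type*} [Ring A] [Algebra ℂ A] (σ : ℕ → A) (q : ℂ)
    (k : ℕ) (c : ℕ → ℂ) : A :=
  ((List.range (k - 1)).map (fun s =>
    ((List.range (s + 1)).map (fun t =>
      heckeBax σ q (s + 1 - t) (c (s + 2) / c (t + 1)))).prod)).prod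

section aux

variable {A : Type*} [Ring A] [Algebra ℂ A]

noncomputable def auxW (σ : ℕ → A) (q : ℂ) (a n : ℕ) : A :=
  ((List.range n).map (fun t => heckeBax σ q (a - t) (q ^ (2 * (a - t))))).prod

lemma heckeBax_eq (σ : ℕ → A) (q : ℂ) (j : ℕ) (u : ℂ) :
    heckeBax σ q j u = σ j + ((q - q⁻¹) * (u - 1)⁻¹) • (1 : A) := by
  rw [heckeBax, Algebra.algebraMap_eq_smul_one]

lemma auxW_add (σ : ℕ → A) (q : ℂ) (a m n : ℕ) :
    auxW σ q a (m + n) = auxW σ q a m * auxW σ q (a - m) n := by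
  unfold auxW
  rw [List.range_add, List.map_append, List.prod_append, List.map_map]
  congr 1
  congr 1
  apply List.map_congr_left
  intro t _
  simp [Function.comp, Nat.sub_sub]

lemma auxW_succ (σ : ℕ → A) (q : ℂ) (a n : ℕ) :
    auxW σ q a (n + 1) = auxW σ q a n * heckeBax σ q (a - n) (q ^ (2 * (a - n))) := by
  unfold auxW
  rw [List.range_succ, List.map_append, List.prod_append]
  simp

lemma commute_auxW (σ : ℕ → A) (q : ℂ) (x : A) (a n : ℕ)
    (h : ∀ t, t < n → Commute x (σ (a - t))) :
    Commute x (auxW σ q a n) := by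
  unfold auxW
  apply Commute.list_prod_right
  intro y hy
  simp only [List.mem_map, List.mem_range] at hy
  obtain ⟨t, ht, rfl⟩ := hy
  rw [heckeBax]
  exact (h t ht).add_right ((Algebra.commutes _ x).symm)

lemma aux_hecke_q2 (q : ℂ) (hq0 : q ≠ 0) (hq2 : q ^ 2 ≠ 1) (s : A)
    (hh : s * s = 1 + (q - q⁻¹) • s) :
    (s + ((q - q⁻¹) * (q ^ 2 - 1)⁻¹) • (1 : A)) * s
      = q • (s + ((q - q⁻¹) * (q ^ 2 - 1)⁻¹) • (1 : A)) := by
  have h21 : q ^ 2 - 1 ≠ 0 := sub_ne_zero.mpr hq2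
  have hb : (q - q⁻¹) * (q ^ 2 - 1)⁻¹ = q⁻¹ := by
    field_simp
  rw [hb, add_mul, hh, smul_mul_assoc, one_mul, smul_add, smul_smul,
    mul_inv_cancel₀ hq0]
  module

lemma aux_ybe (e b d m : ℂ) (s t : A)
    (hbr : s * t * s = t * s * t)
    (hs : s * s = 1 + e • s) (ht : t * t = 1 + e • t)
    (hsc : m * d + b * m + m * e = b * d) :
    (s + b • 1) * (t + m • 1) * (s + d • 1)
      = (t + d • 1) * (s + m • 1) * (t + b • 1) := by
  simp only [mul_add, add_mul, mul_one, one_mul, smul_mul_assoc, mul_smul_comm,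
    smul_smul, smul_add]
  rw [hs, ht, hbr]
  match_scalars <;>
    first
      | ring1
      | linear_combination hsc
      | linear_combination -hsc
      | linear_combination (2:ℂ) * hsc
      | linear_combination (-2:ℂ) * hsc

lemma fusionE_eq_W (σ : ℕ → A) (q : ℂ) (hq0 : q ≠ 0) (k : ℕ) (c : ℕ → ℂ)
    (hc : ∀ j, c j = q ^ (2 * (j - 1))) :
    fusionE σ q k c
      = ((List.range (k - 1)).map (fun s => auxW σ q (s + 1) (s + 1))).prod := by
  unfold fusionE auxW
  congr 1
  apply List.map_congr_left
  intro s _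
  congr 1
  apply List.map_congr_left
  intro t ht
  simp only [List.mem_range] at ht
  congr 1
  rw [hc, hc]
  rw [show s + 2 - 1 = s + 1 from rfl, show t + 1 - 1 = t from rfl,
    div_eq_mul_inv, ← pow_sub₀ q hq0 (by omega : 2 * t ≤ 2 * (s + 1))]
  congr 1
  omega

end aux

theorem fusion_one_row_q_symmetriser (A : Type*) [Ring A] [Algebra ℂ A]
    (k : ℕ) (hk : 2 ≤ k) (q : ℂ) (hq0 : q ≠ 0)
    (hq : ∀ m : ℕ, 1 ≤ m → m ≤ k - 1 → q ^ (2 * m) ≠ 1)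
    (σ : ℕ → A)
    (hbraid : ∀ i : ℕ, 1 ≤ i → i + 1 ≤ k - 1 →
      σ i * σ (i + 1) * σ i = σ (i + 1) * σ i * σ (i + 1))
    (hcomm : ∀ i j : ℕ, 1 ≤ i → i ≤ k - 1 → 1 ≤ j → j ≤ k - 1 →
      (i + 1 < j ∨ j + 1 < i) → σ i * σ j = σ j * σ i)
    (hhecke : ∀ i : ℕ, 1 ≤ i → i ≤ k - 1 → σ i * σ i = 1 + (q - q⁻¹) • σ i)
    (c : ℕ → ℂ) (hc : ∀ j : ℕ, c j = q ^ (2 * (j - 1))) :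
    ∀ i : ℕ, 1 ≤ i → i ≤ k - 1 →
      fusionE σ q k c * σ i = q • fusionE σ q k c := by
  have hk1 : 1 ≤ k - 1 := by omega
  have hq2 : q ^ 2 ≠ 1 := by
    have h := hq 1 le_rfl hk1
    simpa using h
  have hEW : ∀ n : ℕ, fusionE σ q n c
      = ((List.range (n - 1)).map (fun s => auxW σ q (s + 1) (s + 1))).prod :=
    fun n => fusionE_eq_W σ q hq0 n c hc
  -- multiplying by σ 1 on the right
  have key1 : ∀ n : ℕ, 2 ≤ n → fusionE σ q n c * σ 1 = q • fusionE σ q n c := by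
    intro n hn
    obtain ⟨p, hp⟩ : ∃ p, n - 1 = p + 1 := ⟨n - 2, by omega⟩
    have hB : heckeBax σ q 1 (q ^ (2 * 1)) * σ 1
        = q • heckeBax σ q 1 (q ^ (2 * 1)) := by
      rw [show (2 * 1 : ℕ) = 2 from rfl, heckeBax_eq]
      exact aux_hecke_q2 q hq0 hq2 (σ 1) (hhecke 1 le_rfl hk1)
    rw [hEW n, hp, List.range_succ, List.map_append, List.prod_append,
      List.map_singleton, List.prod_singleton,
      auxW_succ, show p + 1 - p = 1 from by omega]
    simp only [mul_assoc]
    rw [hB]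
    simp only [mul_smul_comm]
  intro i0 hi01 hi02
  suffices H : ∀ n : ℕ, 2 ≤ n → n ≤ k → ∀ i, 1 ≤ i → i ≤ n - 1 →
      fusionE σ q n c * σ i = q • fusionE σ q n c by
    exact H k hk le_rfl i0 hi01 hi02
  intro n
  induction n with
  | zero => omega
  | succ n IH =>
    intro h2 hnk i hi1 hi2
    simp only [Nat.add_sub_cancel] at hi2
    rcases Nat.lt_or_ge i 2 with hi | hi
    · interval_cases i
      exact key1 (n + 1) h2
    · -- i ≥ 2; write n = p + 1, i = j + 2
      obtain ⟨j, rfl⟩ : ∃ j, i = j + 2 := ⟨i - 2, by omega⟩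
      obtain ⟨p, rfl⟩ : ∃ p, n = p + 1 := ⟨n - 1, by omega⟩
      have hjn : j + 2 ≤ p + 1 := hi2
      have hnk1 : p + 1 ≤ k - 1 := by omega
      have hIH : fusionE σ q (p + 1) c * σ (j + 1) = q • fusionE σ q (p + 1) c :=
        IH (by omega) (by omega) (j + 1) (by omega) (by omega)
      obtain ⟨r, hr⟩ : ∃ r, p + 1 = r + (j + 2) := ⟨p + 1 - (j + 2), by omega⟩
      -- scalars
      set b : ℂ := (q - q⁻¹) * (q ^ (2 * (j + 2)) - 1)⁻¹ with hbdef
      set m : ℂ := (q - q⁻¹) * (q ^ (2 * (j + 1)) - 1)⁻¹ with hmdef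
      have hXne : q ^ (2 * (j + 2)) - 1 ≠ 0 :=
        sub_ne_zero.mpr (hq (j + 2) (by omega) (by omega))
      have hYne : q ^ (2 * (j + 1)) - 1 ≠ 0 :=
        sub_ne_zero.mpr (hq (j + 1) (by omega) (by omega))
      have hXY : q ^ (2 * (j + 2)) = q ^ (2 * (j + 1)) * q ^ 2 := by
        rw [← pow_add]
        congr 1
      have hscal : m * (-q) + b * m + m * (q - q⁻¹) = b * (-q) := by
        have hb' : b * (q ^ (2 * (j + 2)) - 1) = q - q⁻¹ := by
          rw [hbdef, mul_assoc, inv_mul_cancel₀ hXne, mul_one]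
        have hm' : m * (q ^ (2 * (j + 1)) - 1) = q - q⁻¹ := by
          rw [hmdef, mul_assoc, inv_mul_cancel₀ hYne, mul_one]
        have hX2 : q ^ (2 * (j + 1)) * q ^ 2 - 1 ≠ 0 := hXY ▸ hXne
        rw [hXY] at hb'
        have hqq : q * q⁻¹ = 1 := mul_inv_cancel₀ hq0
        have key0 : (m * (-q) + b * m + m * (q - q⁻¹) - b * (-q))
            * ((q ^ (2 * (j + 1)) - 1) * (q ^ (2 * (j + 1)) * q ^ 2 - 1)) = 0 := by
          linear_combination
            (m * (q ^ (2 * (j + 1)) - 1) + q * (q ^ (2 * (j + 1)) - 1)) * hb'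
            + ((q - q⁻¹) - q⁻¹ * (q ^ (2 * (j + 1)) * q ^ 2 - 1)) * hm'
            + (-(q - q⁻¹) * q ^ (2 * (j + 1)) * q) * hqq
        rcases mul_eq_zero.mp key0 with h | h
        · exact sub_eq_zero.mp h
        · exact absurd h (mul_ne_zero hYne hX2)
      -- names
      set L : A := fusionE σ q (p + 1) c with hLdef
      set Pre : A := auxW σ q (p + 1) r with hPredef
      set Post : A := auxW σ q j j with hPostdef
      set F1 : A := heckeBax σ q (j + 2) (q ^ (2 * (j + 2))) with hF1def
      set F2 : A := heckeBax σ q (j + 1) (q ^ (2 * (j + 1))) with hF2def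
      set G : A := σ (j + 1) + (-q) • (1 : A) with hGdef
      have hF1 : F1 = σ (j + 2) + b • 1 := heckeBax_eq σ q (j + 2) _
      have hF2 : F2 = σ (j + 1) + m • 1 := heckeBax_eq σ q (j + 1) _
      -- decomposition of fusionE (p+2)
      have hrow : auxW σ q (p + 1) (p + 1) = Pre * (F1 * (F2 * Post)) := by
        have h1 := auxW_add σ q (p + 1) r (j + 2)
        rw [← hr, show p + 1 - r = j + 2 by omega] at h1
        have h2 := auxW_add σ q (j + 2) 2 j
        rw [show (2 + j : ℕ) = j + 2 by omega, show (j + 2 - 2 : ℕ) = j by omega] at h2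
        have h3 : auxW σ q (j + 2) 2 = F1 * F2 := by
          rw [hF1def, hF2def]
          show ((List.range 2).map _).prod = _
          rw [show List.range 2 = [0, 1] from rfl]
          simp only [List.map_cons, List.map_nil, List.prod_cons, List.prod_nil, mul_one]
          norm_num
        rw [h1, h2, h3]
        simp only [mul_assoc]
        rfl
      have hdec : fusionE σ q (p + 1 + 1) c = L * (Pre * (F1 * (F2 * Post))) := by
        rw [hEW (p + 1 + 1), show p + 1 + 1 - 1 = p + 1 from rfl, List.range_succ,
          List.map_append, List.prod_append, List.map_singleton, List.prod_singleton,
          hrow, hLdef, hEW (p + 1), show p + 1 - 1 = p from rfl]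
      -- commutation
      have hcPost : Commute (σ (j + 2)) Post := by
        rw [hPostdef]
        apply commute_auxW
        intro t ht
        exact hcomm (j + 2) (j - t) (by omega) (by omega) (by omega) (by omega)
          (Or.inr (by omega))
      have hcPre : Commute G Pre := by
        rw [hGdef, hPredef]
        apply commute_auxW
        intro t ht
        exact Commute.add_left
          (hcomm (j + 1) (p + 1 - t) (by omega) (by omega) (by omega) (by omega)
            (Or.inl (by omega)))
          ((Commute.one_left _).smul_left _)
      -- YBE
      have hybe : (σ (j + 2) + b • 1) * (σ (j + 1) + m • 1) * (σ (j + 2) + (-q) • 1)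
          = G * (σ (j + 2) + m • 1) * (σ (j + 1) + b • 1) := by
        rw [hGdef]
        exact aux_ybe (q - q⁻¹) b (-q) m (σ (j + 2)) (σ (j + 1))
          (hbraid (j + 1) (by omega) (by omega)).symm
          (hhecke (j + 2) (by omega) (by omega))
          (hhecke (j + 1) (by omega) (by omega))
          hscal
      -- key product rewrite
      have key : F1 * (F2 * (σ (j + 2) * Post))
          = G * ((σ (j + 2) + m • 1) * ((σ (j + 1) + b • 1) * Post))
            + q • (F1 * (F2 * Post)) := by
        have e1 : F1 * F2 * σ (j + 2)
            = G * ((σ (j + 2) + m • 1) * (σ (j + 1) + b • 1)) + q • (F1 * F2) := by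
          calc F1 * F2 * σ (j + 2)
              = F1 * F2 * ((σ (j + 2) + (-q) • 1) + q • 1) := by
                congr 1
                module
            _ = F1 * F2 * (σ (j + 2) + (-q) • 1) + q • (F1 * F2) := by
                rw [mul_add, mul_smul_comm, mul_one]
            _ = G * ((σ (j + 2) + m • 1) * (σ (j + 1) + b • 1)) + q • (F1 * F2) := by
                rw [hF1, hF2, hybe, mul_assoc]
        calc F1 * (F2 * (σ (j + 2) * Post)) = (F1 * F2 * σ (j + 2)) * Post := by
              simp only [mul_assoc]
          _ = (G * ((σ (j + 2) + m • 1) * (σ (j + 1) + b • 1)) + q • (F1 * F2)) * Post := by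
              rw [e1]
          _ = G * ((σ (j + 2) + m • 1) * ((σ (j + 1) + b • 1) * Post))
                + q • (F1 * (F2 * Post)) := by
              simp only [add_mul, smul_mul_assoc, mul_assoc]
      have hLG : L * G = 0 := by
        rw [hGdef, mul_add, hIH, mul_smul_comm, mul_one]
        module
      -- assemble
      rw [hdec]
      calc L * (Pre * (F1 * (F2 * Post))) * σ (j + 2)
          = L * (Pre * (F1 * (F2 * (Post * σ (j + 2))))) := by
            simp only [mul_assoc]
        _ = L * (Pre * (F1 * (F2 * (σ (j + 2) * Post)))) := by
            rw [← hcPost.eq]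
        _ = L * (Pre * (G * ((σ (j + 2) + m • 1) * ((σ (j + 1) + b • 1) * Post))))
              + q • (L * (Pre * (F1 * (F2 * Post)))) := by
            rw [key, mul_add, mul_add, mul_smul_comm, mul_smul_comm]
        _ = q • (L * (Pre * (F1 * (F2 * Post)))) := by
            have h4 : Pre * (G * ((σ (j + 2) + m • 1) * ((σ (j + 1) + b • 1) * Post)))
                = G * (Pre * ((σ (j + 2) + m • 1) * ((σ (j + 1) + b • 1) * Post))) := by
              rw [← mul_assoc, ← hcPre.eq, mul_assoc]
            rw [h4, ← mul_assoc, hLG, zero_mul, zero_add]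
end

section
/- Let $A$ be a unital associative $\mathbb{C}$-algebra, let $q \in \mathbb{C}$ with $q \neq 0$ and $q^2 \neq 1$, let $a \in \mathbb{C}$, and let $\sigma \in A$ be invertible. Set $e = 1 - (q - q^{-1})^{-1}(\sigma - \sigma^{-1})$. If $e \sigma = a\, e$, then $\sigma$ satisfies the cubic characteristic equation $(\sigma - q)(\sigma + q^{-1})(\sigma - a) = 0$ in $A$. -/
/-!
STATEMENT 17: If `σ` is invertible, `e = 1 - (q - q⁻¹)⁻¹(σ - σ⁻¹)` and
`e σ = a e`, then `σ` satisfies the cubic characteristic equation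
`(σ - q)(σ + q⁻¹)(σ - a) = 0`.
-/

theorem bmw_cubic_characteristic (A : Type*) [Ring A] [Algebra ℂ A]
    (q : ℂ) (hq0 : q ≠ 0) (hq2 : q ^ 2 ≠ 1) (a : ℂ) (σ : Aˣ) (e : A)
    (he : e = 1 - (q - q⁻¹)⁻¹ • ((σ : A) - (↑σ⁻¹ : A)))
    (heσ : e * σ = a • e) :
    ((σ : A) - algebraMap ℂ A q) * ((σ : A) + algebraMap ℂ A q⁻¹)
      * ((σ : A) - algebraMap ℂ A a) = 0 := by
  have hd : q - q⁻¹ ≠ 0 := by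
    intro h
    apply hq2
    have h1 : q = q⁻¹ := sub_eq_zero.mp h
    rw [sq]; nth_rewrite 2 [h1]; exact mul_inv_cancel₀ hq0
  set x : A := (σ : A) with hx
  set y : A := ((σ⁻¹ : Aˣ) : A) with hy
  have hxy : x * y = 1 := by rw [hx, hy, ← Units.val_mul, mul_inv_cancel σ]; rfl
  have hyx : y * x = 1 := by rw [hx, hy, ← Units.val_mul, inv_mul_cancel σ]; rfl
  subst he
  have h2 := congrArg (fun z => (q - q⁻¹) • (z * x)) heσ
  simp only [sub_mul, one_mul, smul_mul_assoc, smul_sub, smul_smul,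
    mul_inv_cancel₀ hd, one_smul, mul_assoc, hyx, mul_one, smul_add] at h2
  have hs : q * (a * (q - q⁻¹)⁻¹) - q⁻¹ * (a * (q - q⁻¹)⁻¹) = a := by
    rw [show q * (a * (q - q⁻¹)⁻¹) - q⁻¹ * (a * (q - q⁻¹)⁻¹)
      = a * ((q - q⁻¹)⁻¹ * (q - q⁻¹)) by ring, inv_mul_cancel₀ hd, mul_one]
  rw [hs] at h2
  simp only [Algebra.algebraMap_eq_smul_one, sub_mul, mul_sub, add_mul, mul_add,
    smul_mul_assoc, mul_smul_comm, smul_smul, one_mul, mul_one, mul_assoc,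
    mul_inv_cancel₀ hq0]
  have hx3 : x * (x * x) = (q - q⁻¹ + a) • (x * x) + (1 - (q * a - q⁻¹ * a)) • x - a • 1 := by
    linear_combination (norm := module) -h2
  rw [hx3]
  match_scalars <;> (field_simp; try ring)
end
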